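/- arXiv:2509.21832 — 4 statements merged into one kernel-verified Lean document; each statement's English description precedes it below -/
import Mathlib

section
/- Let f : ℝ → ℝ be measurable with f(v) > 0 for a.e. v, and suppose f has finite moments ∫_ℝ f dv = ρ > 0, ∫_ℝ v f dv = ρu, ∫_ℝ (v−u)² f dv = ρT with T > 0. Let M = M[ρ,u,T] be the 1D Maxwellian with the same density, bulk velocity and temperature. Assume the integrals ∫_ℝ f |log f| dv, ∫_ℝ M |log f| dv, ∫_ℝ f |log M| dv and ∫_ℝ M |log M| dv are all finite. Then the BGK entropy inequality holds: ∫_ℝ (M(v) − f(v)) log f(v) dv ≤ 0. -/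
open MeasureTheory Real

/-- The 1D Maxwellian with density `ρ`, bulk velocity `u`, and temperature `T`. -/
noncomputable def maxwellian (ρ u T : ℝ) (v : ℝ) : ℝ :=
  ρ / Real.sqrt (2 * Real.pi * T) * Real.exp (-(v - u) ^ 2 / (2 * T))

lemma integrable_sq_mul_gaussian {b : ℝ} (hb : 0 < b) :
    Integrable fun x : ℝ => x ^ 2 * Real.exp (-b * x ^ 2) := by
  have := integrable_rpow_mul_exp_neg_mul_sq hb (s := 2) (by norm_num)
  simpa [Real.rpow_natCast] using this

lemma integral_sq_mul_gaussian {b : ℝ} (hb : 0 < b) :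
    (∫ x : ℝ, x ^ 2 * Real.exp (-b * x ^ 2)) = Real.sqrt (π / b) / (2 * b) := by
  have hderiv : ∀ x : ℝ, HasDerivAt (fun x : ℝ => x * Real.exp (-b * x ^ 2))
      (Real.exp (-b * x ^ 2) - 2 * b * (x ^ 2 * Real.exp (-b * x ^ 2))) x := by
    intro x
    have h1 : HasDerivAt (fun x : ℝ => -b * x ^ 2) (-b * (2 * x)) x := by
      simpa using ((hasDerivAt_pow 2 x).const_mul (-b))
    have h2 := (h1.exp)
    have : HasDerivAt (fun x : ℝ => x * Real.exp (-b * x ^ 2))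
        (1 * Real.exp (-b * x ^ 2) + x * (Real.exp (-b * x ^ 2) * (-b * (2 * x)))) x :=
      (hasDerivAt_id x).mul h2
    convert this using 1
    ring
  have hint : Integrable (fun x : ℝ =>
      Real.exp (-b * x ^ 2) - 2 * b * (x ^ 2 * Real.exp (-b * x ^ 2))) :=
    (integrable_exp_neg_mul_sq hb).sub ((integrable_sq_mul_gaussian hb).const_mul _)
  have h0 := integral_eq_zero_of_hasDerivAt_of_integrable hderiv hint
    (integrable_mul_exp_neg_mul_sq hb)
  rw [integral_sub (integrable_exp_neg_mul_sq hb)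
    ((integrable_sq_mul_gaussian hb).const_mul _), MeasureTheory.integral_const_mul,
    integral_gaussian] at h0
  have hb' : (2 : ℝ) * b ≠ 0 := by positivity
  field_simp at h0 ⊢
  linarith

theorem bgk_entropy_inequality (f : ℝ → ℝ) (hf_meas : Measurable f)
    (hf_pos : ∀ᵐ v : ℝ ∂volume, 0 < f v)
    (ρ u T : ℝ) (hρ : 0 < ρ) (hT : 0 < T)
    (hmass : (∫ v : ℝ, f v) = ρ)
    (hmom : (∫ v : ℝ, v * f v) = ρ * u)
    (htemp : (∫ v : ℝ, (v - u) ^ 2 * f v) = ρ * T)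
    (hflogf : Integrable (fun v : ℝ => f v * |Real.log (f v)|))
    (hMlogf : Integrable (fun v : ℝ => maxwellian ρ u T v * |Real.log (f v)|))
    (hflogM : Integrable (fun v : ℝ => f v * |Real.log (maxwellian ρ u T v)|))
    (hMlogM : Integrable
      (fun v : ℝ => maxwellian ρ u T v * |Real.log (maxwellian ρ u T v)|)) :
    (∫ v : ℝ, (maxwellian ρ u T v - f v) * Real.log (f v)) ≤ 0 := by
  set M := maxwellian ρ u T with hM
  set c : ℝ := ρ / Real.sqrt (2 * π * T) with hcdef
  set b : ℝ := 1 / (2 * T) with hbdef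
  have hsqrt : 0 < Real.sqrt (2 * π * T) := Real.sqrt_pos.mpr (by positivity)
  have hc : 0 < c := div_pos hρ hsqrt
  have hb : 0 < b := by rw [hbdef]; positivity
  have hMeq : ∀ v, M v = c * Real.exp (-b * (v - u) ^ 2) := by
    intro v
    rw [hM, maxwellian, hbdef]
    congr 1
    field_simp
  have hMpos : ∀ v, 0 < M v := fun v => by
    rw [hMeq v]; positivity
  have hlogM : ∀ v, Real.log (M v) = Real.log c + (-b * (v - u) ^ 2) := by
    intro v
    rw [hMeq v, Real.log_mul hc.ne' (Real.exp_pos _).ne', Real.log_exp]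
  have hM_meas : Measurable M := by
    simp only [funext hMeq]
    fun_prop
  -- Integrability of the Maxwellian and its second moment
  have hM_int : Integrable M := by
    rw [funext hMeq]
    exact ((integrable_exp_neg_mul_sq hb).comp_sub_right u).const_mul c
  have hM2_int : Integrable (fun v => (v - u) ^ 2 * M v) := by
    have h := (((integrable_sq_mul_gaussian hb).comp_sub_right u).const_mul c)
    apply h.congr
    filter_upwards with v
    rw [hMeq v]; ring
  have hsqrt_eq : Real.sqrt (π / b) = Real.sqrt (2 * π * T) := by
    congr 1
    rw [hbdef]
    field_simp
  have hMint_eq : (∫ v, M v) = ρ := by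
    rw [funext hMeq, MeasureTheory.integral_const_mul]
    rw [show (∫ v : ℝ, Real.exp (-b * (v - u) ^ 2))
        = ∫ v : ℝ, Real.exp (-b * v ^ 2) from
      integral_sub_right_eq_self (fun v : ℝ => Real.exp (-b * v ^ 2)) u]
    rw [integral_gaussian, hsqrt_eq, hcdef]
    field_simp
  have hM2_eq : (∫ v, (v - u) ^ 2 * M v) = ρ * T := by
    have : (fun v => (v - u) ^ 2 * M v)
        = fun v => c * ((v - u) ^ 2 * Real.exp (-b * (v - u) ^ 2)) := by
      funext v; rw [hMeq v]; ring
    rw [this, MeasureTheory.integral_const_mul]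
    rw [show (∫ v : ℝ, (v - u) ^ 2 * Real.exp (-b * (v - u) ^ 2))
        = ∫ v : ℝ, v ^ 2 * Real.exp (-b * v ^ 2) from
      integral_sub_right_eq_self (fun v : ℝ => v ^ 2 * Real.exp (-b * v ^ 2)) u]
    rw [integral_sq_mul_gaussian hb, hsqrt_eq, hcdef, hbdef,
      show (2 : ℝ) * (1 / (2 * T)) = 1 / T by field_simp]
    field_simp
  -- integrability of products without absolute values
  have hlog_meas : Measurable fun v => Real.log (f v) := Real.measurable_log.comp hf_meas
  have hlogM_meas : Measurable fun v => Real.log (M v) := Real.measurable_log.comp hM_meas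
  have habs : ∀ (g h : ℝ → ℝ), (∀ᵐ v : ℝ ∂volume, 0 < g v) → Measurable g → Measurable h →
      Integrable (fun v => g v * |h v|) → Integrable fun v => g v * h v := by
    intro g h hg hgm hhm hint
    refine hint.mono' (hgm.mul hhm).aestronglyMeasurable ?_
    filter_upwards [hg] with v hv
    rw [Real.norm_eq_abs, abs_mul, abs_of_pos hv]
  have hff : Integrable fun v => f v * Real.log (f v) :=
    habs _ _ hf_pos hf_meas hlog_meas hflogf
  have hMf : Integrable fun v => M v * Real.log (f v) :=
    habs _ _ (Filter.Eventually.of_forall hMpos) hM_meas hlog_meas hMlogf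
  have hfM : Integrable fun v => f v * Real.log (M v) :=
    habs _ _ hf_pos hf_meas hlogM_meas hflogM
  have hMM : Integrable fun v => M v * Real.log (M v) :=
    habs _ _ (Filter.Eventually.of_forall hMpos) hM_meas hlogM_meas hMlogM
  -- integrability of f itself
  have hf_int : Integrable f := by
    have hdom : Integrable fun v => f v * |Real.log (f v)| + f v * |Real.log (M v)|
        + Real.exp 2 * M v := (hflogf.add hflogM).add (hM_int.const_mul _)
    refine hdom.mono' hf_meas.aestronglyMeasurable ?_
    filter_upwards [hf_pos] with v hv
    rw [Real.norm_eq_abs, abs_of_pos hv]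
    have h1 : 0 ≤ f v * |Real.log (f v)| := mul_nonneg hv.le (abs_nonneg _)
    have h2 : 0 ≤ f v * |Real.log (M v)| := mul_nonneg hv.le (abs_nonneg _)
    rcases le_total (f v) (Real.exp 1) with hfe | hfe
    · rcases le_or_gt 1 |Real.log (M v)| with hM1 | hM1
      · have : f v ≤ f v * |Real.log (M v)| := le_mul_of_one_le_right hv.le hM1
        have h3 : 0 < Real.exp 2 * M v := mul_pos (Real.exp_pos 2) (hMpos v)
        linarith
      · have hlb : -1 < Real.log (M v) := (abs_lt.mp hM1).1
        have : Real.exp (-1) < M v := by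
          have := Real.exp_lt_exp.mpr hlb
          rwa [Real.exp_log (hMpos v)] at this
        have h4 : Real.exp 1 < Real.exp 2 * M v := by
          have h5 : Real.exp 2 * Real.exp (-1) = Real.exp 1 := by
            rw [← Real.exp_add]; norm_num
          nlinarith [Real.exp_pos (2 : ℝ)]
        linarith
    · have : (1 : ℝ) ≤ Real.log (f v) := by
        have := Real.log_le_log (Real.exp_pos 1) hfe
        rwa [Real.log_exp] at this
      have : f v ≤ f v * |Real.log (f v)| :=
        le_mul_of_one_le_right hv.le (this.trans (le_abs_self _))
      have h3 : 0 < Real.exp 2 * M v := mul_pos (Real.exp_pos 2) (hMpos v)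
      linarith
  -- integrability of (v-u)^2 * f
  have hf2_int : Integrable fun v => (v - u) ^ 2 * f v := by
    have h := (hf_int.const_mul (2 * T * Real.log c)).sub (hfM.const_mul (2 * T))
    apply h.congr
    filter_upwards with v
    simp only [Pi.sub_apply]
    rw [hlogM v, hbdef]
    field_simp
    ring
  -- the key moment identity: ∫ M log M = ∫ f log M
  have hI1 : (∫ v, f v * Real.log (M v)) = ρ * Real.log c - b * (ρ * T) := by
    have : (fun v => f v * Real.log (M v))
        = fun v => Real.log c * f v - b * ((v - u) ^ 2 * f v) := by
      funext v; rw [hlogM v]; ring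
    rw [this, integral_sub (hf_int.const_mul _) (hf2_int.const_mul _),
      MeasureTheory.integral_const_mul, MeasureTheory.integral_const_mul, hmass, htemp]
    ring
  have hI2 : (∫ v, M v * Real.log (M v)) = ρ * Real.log c - b * (ρ * T) := by
    have : (fun v => M v * Real.log (M v))
        = fun v => Real.log c * M v - b * ((v - u) ^ 2 * M v) := by
      funext v; rw [hlogM v]; ring
    rw [this, integral_sub (hM_int.const_mul _) (hM2_int.const_mul _),
      MeasureTheory.integral_const_mul, MeasureTheory.integral_const_mul, hMint_eq, hM2_eq]
    ring
  have hkey : (∫ v, M v * Real.log (M v)) = ∫ v, f v * Real.log (M v) := by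
    rw [hI1, hI2]
  -- final computation
  have hstep1 : (∫ v : ℝ, (M v - f v) * Real.log (f v))
      = ∫ v : ℝ, (M v - f v) * (Real.log (f v) - Real.log (M v)) := by
    have e1 : (fun v : ℝ => (M v - f v) * Real.log (f v))
        = fun v => M v * Real.log (f v) - f v * Real.log (f v) := by
      funext v; ring
    have e2 : (fun v : ℝ => (M v - f v) * (Real.log (f v) - Real.log (M v)))
        = fun v => (M v * Real.log (f v) - f v * Real.log (f v))
          - (M v * Real.log (M v) - f v * Real.log (M v)) := by
      funext v; ring
    have hsub1 : Integrable (fun v => M v * Real.log (f v) - f v * Real.log (f v)) :=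
      hMf.sub hff
    have hsub2 : Integrable (fun v => M v * Real.log (M v) - f v * Real.log (M v)) :=
      hMM.sub hfM
    rw [e1, e2, integral_sub hsub1 hsub2, integral_sub hMf hff,
      integral_sub hMM hfM, hkey]
    ring
  rw [hstep1]
  apply integral_nonpos_of_ae
  filter_upwards [hf_pos] with v hv
  have hle : (M v - f v) * (Real.log (f v) - Real.log (M v)) ≤ 0 := by
    rcases le_total (f v) (M v) with h | h
    · have hlog : Real.log (f v) ≤ Real.log (M v) := Real.log_le_log hv h
      nlinarith
    · have hlog : Real.log (M v) ≤ Real.log (f v) := Real.log_le_log (hMpos v) h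
      nlinarith
  simpa using hle
end

section
/- Let ρ, u, T : ℝ → ℝ be differentiable at time t with ρ(t) > 0 and T(t) > 0, and let M(t,v) = (ρ(t)/√(2πT(t))) exp(−(v−u(t))²/(2T(t))) be the time-dependent 1D Maxwellian. Then the time derivative ∂ₜM(t,·) is fixed by the projection associated with M(t,·): Π_{M(t,·)}[∂ₜM(t,·)](v) = ∂ₜM(t,v) for all v ∈ ℝ. -/
open MeasureTheory Real

/-- The 1D micro-macro projection operator `Π_M` associated with the
Maxwellian `M[ρ,u,T]`. -/
noncomputable def projMax (ρ u T : ℝ) (F : ℝ → ℝ) (v : ℝ) : ℝ :=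
  ((1 / ρ) * (∫ w : ℝ, F w)
    + ((v - u) / Real.sqrt T) *
        ((1 / ρ) * ∫ w : ℝ, ((w - u) / Real.sqrt T) * F w)
    + Real.sqrt 2 * ((v - u) ^ 2 / (2 * T) - 1 / 2) *
        ((1 / ρ) * ∫ w : ℝ, Real.sqrt 2 * ((w - u) ^ 2 / (2 * T) - 1 / 2) * F w))
  * maxwellian ρ u T v

lemma integrable_pow_mul_exp' {b : ℝ} (hb : 0 < b) (n : ℕ) :
    Integrable (fun x : ℝ => x ^ n * Real.exp (-b * x ^ 2)) := by
  have h := integrable_rpow_mul_exp_neg_mul_sq hb (s := (n : ℝ))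
    (lt_of_lt_of_le (by norm_num) (Nat.cast_nonneg n))
  simpa [Real.rpow_natCast] using h

lemma integral_odd_pow_mul_exp (b : ℝ) (k : ℕ) :
    ∫ x : ℝ, x ^ (2 * k + 1) * Real.exp (-b * x ^ 2) = 0 := by
  have h := MeasureTheory.integral_neg_eq_self
    (fun x : ℝ => x ^ (2 * k + 1) * Real.exp (-b * x ^ 2)) (volume : Measure ℝ)
  have h2 : ∀ x : ℝ, (-x) ^ (2 * k + 1) * Real.exp (-b * (-x) ^ 2)
      = -(x ^ (2 * k + 1) * Real.exp (-b * x ^ 2)) := by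
    intro x
    rw [Odd.neg_pow ⟨k, by ring⟩, neg_sq]
    ring
  simp only [h2, integral_neg] at h
  linarith

lemma hasDerivAt_gauss {b : ℝ} (x : ℝ) :
    HasDerivAt (fun y : ℝ => Real.exp (-b * y ^ 2)) ((-2 * b * x) * Real.exp (-b * x ^ 2)) x := by
  have h := ((hasDerivAt_pow 2 x).const_mul (-b)).exp
  convert h using 1
  simp
  ring

lemma parts_aux {b : ℝ} (hb : 0 < b) (n : ℕ) :
    ∫ x : ℝ, x ^ (n + 1) * ((-2 * b * x) * Real.exp (-b * x ^ 2))
      = - ∫ x : ℝ, ((n + 1 : ℝ) * x ^ n) * Real.exp (-b * x ^ 2) := by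
  have hu : ∀ x : ℝ, HasDerivAt (fun y : ℝ => y ^ (n + 1)) ((n + 1 : ℝ) * x ^ n) x := by
    intro x
    simpa using hasDerivAt_pow (n + 1) x
  have hv : ∀ x : ℝ, HasDerivAt (fun y : ℝ => Real.exp (-b * y ^ 2))
      ((-2 * b * x) * Real.exp (-b * x ^ 2)) x := fun x => hasDerivAt_gauss x
  exact integral_mul_deriv_eq_deriv_mul_of_integrable (fun x _ => hu x) (fun x _ => hv x)
    (by
      have h := (integrable_pow_mul_exp' hb (n + 2)).const_mul (-2 * b)
      apply h.congr
      filter_upwards with x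
      simp only [Pi.mul_apply]
      ring)
    (by
      have h := (integrable_pow_mul_exp' hb n).const_mul ((n : ℝ) + 1)
      apply h.congr
      filter_upwards with x
      simp only [Pi.mul_apply]
      ring)
    (by
      have h := integrable_pow_mul_exp' hb (n + 1)
      apply h.congr
      filter_upwards with x
      simp only [Pi.mul_apply])

lemma moment_rec {b : ℝ} (hb : 0 < b) (n : ℕ) :
    ∫ x : ℝ, x ^ (n + 2) * Real.exp (-b * x ^ 2)
      = ((n + 1 : ℝ) / (2 * b)) * ∫ x : ℝ, x ^ n * Real.exp (-b * x ^ 2) := by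
  have h := parts_aux hb n
  have e1 : (fun x : ℝ => x ^ (n + 1) * ((-2 * b * x) * Real.exp (-b * x ^ 2)))
      = fun x : ℝ => (-2 * b) * (x ^ (n + 2) * Real.exp (-b * x ^ 2)) := by
    funext x; ring
  have e2 : (fun x : ℝ => ((n + 1 : ℝ) * x ^ n) * Real.exp (-b * x ^ 2))
      = fun x : ℝ => ((n : ℝ) + 1) * (x ^ n * Real.exp (-b * x ^ 2)) := by
    funext x; ring
  rw [e1, e2, integral_const_mul, integral_const_mul] at h
  have hb' : (2 : ℝ) * b ≠ 0 := by positivity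
  rw [div_mul_eq_mul_div, eq_div_iff hb']
  linear_combination -h

lemma moment0 {b : ℝ} (hb : 0 < b) :
    ∫ x : ℝ, x ^ 0 * Real.exp (-b * x ^ 2) = Real.sqrt (π / b) := by
  simpa using integral_gaussian b

lemma moment2 {b : ℝ} (hb : 0 < b) :
    ∫ x : ℝ, x ^ 2 * Real.exp (-b * x ^ 2) = Real.sqrt (π / b) / (2 * b) := by
  have h := moment_rec hb 0
  rw [moment0 hb] at h
  rw [h]; ring

lemma moment4 {b : ℝ} (hb : 0 < b) :
    ∫ x : ℝ, x ^ 4 * Real.exp (-b * x ^ 2) = 3 * Real.sqrt (π / b) / (4 * b ^ 2) := by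
  have h := moment_rec hb 2
  rw [moment2 hb] at h
  rw [h]; field_simp; ring

lemma quartic_integral {τ : ℝ} (hτ : 0 < τ) (a0 a1 a2 a3 a4 : ℝ) :
    ∫ x : ℝ, (a0 + a1 * x + a2 * x ^ 2 + a3 * x ^ 3 + a4 * x ^ 4)
        * Real.exp (-x ^ 2 / (2 * τ))
      = (a0 + a2 * τ + 3 * a4 * τ ^ 2) * Real.sqrt (2 * π * τ) := by
  set b : ℝ := (2 * τ)⁻¹ with hbdef
  have hb : 0 < b := by positivity
  have hexp : ∀ x : ℝ, Real.exp (-x ^ 2 / (2 * τ)) = Real.exp (-b * x ^ 2) := by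
    intro x
    congr 1
    rw [hbdef]
    field_simp
  have hsplit : (fun x : ℝ => (a0 + a1 * x + a2 * x ^ 2 + a3 * x ^ 3 + a4 * x ^ 4)
        * Real.exp (-x ^ 2 / (2 * τ)))
      = fun x : ℝ => a0 * (x ^ 0 * Real.exp (-b * x ^ 2))
          + (a1 * (x ^ 1 * Real.exp (-b * x ^ 2))
          + (a2 * (x ^ 2 * Real.exp (-b * x ^ 2))
          + (a3 * (x ^ 3 * Real.exp (-b * x ^ 2))
          + a4 * (x ^ 4 * Real.exp (-b * x ^ 2))))) := by
    funext x
    rw [hexp]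
    ring
  have i0 := integrable_pow_mul_exp' hb 0
  have i1 := integrable_pow_mul_exp' hb 1
  have i2 := integrable_pow_mul_exp' hb 2
  have i3 := integrable_pow_mul_exp' hb 3
  have i4 := integrable_pow_mul_exp' hb 4
  have j4 : Integrable (fun x : ℝ => a3 * (x ^ 3 * Real.exp (-b * x ^ 2))
      + a4 * (x ^ 4 * Real.exp (-b * x ^ 2))) := by
    exact (i3.const_mul _).add (i4.const_mul _)
  have j3 : Integrable (fun x : ℝ => a2 * (x ^ 2 * Real.exp (-b * x ^ 2))
      + (a3 * (x ^ 3 * Real.exp (-b * x ^ 2)) + a4 * (x ^ 4 * Real.exp (-b * x ^ 2)))) := by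
    exact (i2.const_mul _).add j4
  have j2 : Integrable (fun x : ℝ => a1 * (x ^ 1 * Real.exp (-b * x ^ 2))
      + (a2 * (x ^ 2 * Real.exp (-b * x ^ 2))
      + (a3 * (x ^ 3 * Real.exp (-b * x ^ 2)) + a4 * (x ^ 4 * Real.exp (-b * x ^ 2))))) := by
    exact (i1.const_mul _).add j3
  rw [hsplit, integral_add (i0.const_mul _) j2,
    integral_add (i1.const_mul _) j3,
    integral_add (i2.const_mul _) j4,
    integral_add (i3.const_mul _) (i4.const_mul _),
    integral_const_mul, integral_const_mul, integral_const_mul, integral_const_mul,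
    integral_const_mul, moment0 hb, moment2 hb, moment4 hb]
  have o1 : ∫ x : ℝ, x ^ 1 * Real.exp (-b * x ^ 2) = 0 := by
    have := integral_odd_pow_mul_exp b 0
    norm_num at this
    simpa using this
  have o3 : ∫ x : ℝ, x ^ 3 * Real.exp (-b * x ^ 2) = 0 := by
    have := integral_odd_pow_mul_exp b 1
    norm_num at this
    simpa using this
  rw [o1, o3]
  have hs : Real.sqrt (π / b) = Real.sqrt (2 * π * τ) := by
    congr 1
    rw [hbdef]
    field_simp
  rw [hs]
  have hτ' : τ ≠ 0 := ne_of_gt hτ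
  rw [hbdef]
  field_simp
  ring

lemma centered_quartic_integral {τ : ℝ} (hτ : 0 < τ) (U a0 a1 a2 a3 a4 : ℝ) :
    ∫ x : ℝ, (a0 + a1 * (x - U) + a2 * (x - U) ^ 2 + a3 * (x - U) ^ 3 + a4 * (x - U) ^ 4)
        * Real.exp (-(x - U) ^ 2 / (2 * τ))
      = (a0 + a2 * τ + 3 * a4 * τ ^ 2) * Real.sqrt (2 * π * τ) := by
  rw [← integral_add_right_eq_self
    (fun x : ℝ => (a0 + a1 * (x - U) + a2 * (x - U) ^ 2 + a3 * (x - U) ^ 3 + a4 * (x - U) ^ 4)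
        * Real.exp (-(x - U) ^ 2 / (2 * τ))) U]
  simp only [add_sub_cancel_right]
  exact quartic_integral hτ a0 a1 a2 a3 a4

lemma maxwellian_hasDerivAt (ρ u T : ℝ → ℝ) (t : ℝ)
    (hρd : DifferentiableAt ℝ ρ t) (hud : DifferentiableAt ℝ u t)
    (hTd : DifferentiableAt ℝ T t)
    (hρ : 0 < ρ t) (hT : 0 < T t) (v : ℝ) :
    HasDerivAt (fun s : ℝ => maxwellian (ρ s) (u s) (T s) v)
      ((deriv ρ t / ρ t + deriv u t * (v - u t) / T t
          + deriv T t * ((v - u t) ^ 2 / (2 * (T t) ^ 2) - 1 / (2 * T t)))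
        * maxwellian (ρ t) (u t) (T t) v) t := by
  have hTpos : (0 : ℝ) < 2 * π * T t := by positivity
  have hπT : HasDerivAt (fun s : ℝ => 2 * π * T s) (2 * π * deriv T t) t :=
    (hTd.hasDerivAt).const_mul (2 * π)
  have hsq : HasDerivAt (fun s : ℝ => Real.sqrt (2 * π * T s))
      ((2 * π * deriv T t) / (2 * Real.sqrt (2 * π * T t))) t :=
    hπT.sqrt (ne_of_gt hTpos)
  have hsqpos : 0 < Real.sqrt (2 * π * T t) := Real.sqrt_pos.mpr hTpos
  have hnum := (hρd.hasDerivAt).div hsq (ne_of_gt hsqpos)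
  have h1 : HasDerivAt (fun s : ℝ => v - u s) (-(deriv u t)) t := by
    exact hud.hasDerivAt.const_sub v
  have h2 := (h1.pow 2).neg
  have h4 : HasDerivAt (fun s : ℝ => 2 * T s) (2 * deriv T t) t :=
    hTd.hasDerivAt.const_mul 2
  have h5 := h2.div h4 (by positivity)
  have h6 := h5.exp
  have h7 := hnum.mul h6
  convert h7 using 1
  · rfl
  · rfl
  · rfl
  simp only [maxwellian, Nat.cast_ofNat, pow_one, Pi.div_apply, Pi.neg_apply, Pi.pow_apply]
  set S : ℝ := Real.sqrt (2 * π * T t) with hSdef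
  have hs2 : S ^ 2 = 2 * π * T t := Real.sq_sqrt (le_of_lt hTpos)
  have hTne : T t ≠ 0 := ne_of_gt hT
  have hρne : ρ t ≠ 0 := ne_of_gt hρ
  have hsne : S ≠ 0 := ne_of_gt hsqpos
  have hπne : (π : ℝ) ≠ 0 := Real.pi_ne_zero
  have hTt : T t = S ^ 2 / (2 * π) := by rw [hs2]; field_simp
  rw [hTt]
  field_simp
  ring

set_option maxHeartbeats 1000000 in
theorem projMax_fixes_time_derivative (ρ u T : ℝ → ℝ) (t : ℝ)
    (hρd : DifferentiableAt ℝ ρ t) (hud : DifferentiableAt ℝ u t)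
    (hTd : DifferentiableAt ℝ T t)
    (hρ : 0 < ρ t) (hT : 0 < T t) :
    ∀ v : ℝ,
      projMax (ρ t) (u t) (T t)
        (fun w : ℝ => deriv (fun s : ℝ => maxwellian (ρ s) (u s) (T s) w) t) v
      = deriv (fun s : ℝ => maxwellian (ρ s) (u s) (T s) v) t := by
  intro v
  set R : ℝ := ρ t
  set U : ℝ := u t
  set τ : ℝ := T t
  set R' : ℝ := deriv ρ t
  set U' : ℝ := deriv u t
  set T' : ℝ := deriv T t
  have hτne : τ ≠ 0 := ne_of_gt hT
  have hRne : R ≠ 0 := ne_of_gt hρ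
  have hsτ : Real.sqrt τ ^ 2 = τ := Real.sq_sqrt (le_of_lt hT)
  have hsτne : Real.sqrt τ ≠ 0 := ne_of_gt (Real.sqrt_pos.mpr hT)
  have hs2 : Real.sqrt 2 ^ 2 = (2 : ℝ) := Real.sq_sqrt (by norm_num)
  have hs2ne : Real.sqrt 2 ≠ 0 := by positivity
  have hSpos : 0 < Real.sqrt (2 * π * τ) := Real.sqrt_pos.mpr (by positivity)
  have hSne : Real.sqrt (2 * π * τ) ≠ 0 := ne_of_gt hSpos
  have hD : ∀ w : ℝ, deriv (fun s : ℝ => maxwellian (ρ s) (u s) (T s) w) t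
      = (R' / R + U' * (w - U) / τ + T' * ((w - U) ^ 2 / (2 * τ ^ 2) - 1 / (2 * τ)))
        * maxwellian R U τ w :=
    fun w => (maxwellian_hasDerivAt ρ u T t hρd hud hTd hρ hT w).deriv
  -- the three moments of the time derivative
  have h1 : ∫ w : ℝ,
      (R' / R + U' * (w - U) / τ + T' * ((w - U) ^ 2 / (2 * τ ^ 2) - 1 / (2 * τ)))
        * maxwellian R U τ w = R' := by
    have e : (fun w : ℝ =>
        (R' / R + U' * (w - U) / τ + T' * ((w - U) ^ 2 / (2 * τ ^ 2) - 1 / (2 * τ)))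
          * maxwellian R U τ w)
        = fun w : ℝ => (R / Real.sqrt (2 * π * τ)) *
            (((R' / R - T' / (2 * τ)) + (U' / τ) * (w - U) + (T' / (2 * τ ^ 2)) * (w - U) ^ 2
              + 0 * (w - U) ^ 3 + 0 * (w - U) ^ 4)
              * Real.exp (-(w - U) ^ 2 / (2 * τ))) := by
      funext w
      simp only [maxwellian]
      field_simp
      ring
    rw [e, integral_const_mul, centered_quartic_integral hT]
    field_simp
    ring
  have h2 : ∫ w : ℝ, ((w - U) / Real.sqrt τ) *
      ((R' / R + U' * (w - U) / τ + T' * ((w - U) ^ 2 / (2 * τ ^ 2) - 1 / (2 * τ)))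
        * maxwellian R U τ w) = R * U' / Real.sqrt τ := by
    have e : (fun w : ℝ => ((w - U) / Real.sqrt τ) *
        ((R' / R + U' * (w - U) / τ + T' * ((w - U) ^ 2 / (2 * τ ^ 2) - 1 / (2 * τ)))
          * maxwellian R U τ w))
        = fun w : ℝ => (R / Real.sqrt (2 * π * τ)) *
            ((0 + ((R' / R - T' / (2 * τ)) / Real.sqrt τ) * (w - U)
              + (U' / (τ * Real.sqrt τ)) * (w - U) ^ 2
              + (T' / (2 * τ ^ 2 * Real.sqrt τ)) * (w - U) ^ 3 + 0 * (w - U) ^ 4)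
              * Real.exp (-(w - U) ^ 2 / (2 * τ))) := by
      funext w
      simp only [maxwellian]
      field_simp
      ring
    rw [e, integral_const_mul, centered_quartic_integral hT]
    field_simp
    ring
  have h3 : ∫ w : ℝ, Real.sqrt 2 * ((w - U) ^ 2 / (2 * τ) - 1 / 2) *
      ((R' / R + U' * (w - U) / τ + T' * ((w - U) ^ 2 / (2 * τ ^ 2) - 1 / (2 * τ)))
        * maxwellian R U τ w) = R * Real.sqrt 2 * T' / (2 * τ) := by
    have e : (fun w : ℝ => Real.sqrt 2 * ((w - U) ^ 2 / (2 * τ) - 1 / 2) *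
        ((R' / R + U' * (w - U) / τ + T' * ((w - U) ^ 2 / (2 * τ ^ 2) - 1 / (2 * τ)))
          * maxwellian R U τ w))
        = fun w : ℝ => (R / Real.sqrt (2 * π * τ)) *
            ((-(Real.sqrt 2 / 2) * (R' / R - T' / (2 * τ))
              + (-(Real.sqrt 2 / 2) * (U' / τ)) * (w - U)
              + (Real.sqrt 2 * ((R' / R - T' / (2 * τ)) / (2 * τ) - T' / (4 * τ ^ 2)))
                  * (w - U) ^ 2
              + (Real.sqrt 2 * U' / (2 * τ ^ 2)) * (w - U) ^ 3
              + (Real.sqrt 2 * T' / (4 * τ ^ 3)) * (w - U) ^ 4)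
              * Real.exp (-(w - U) ^ 2 / (2 * τ))) := by
      funext w
      simp only [maxwellian]
      field_simp
      ring
    rw [e, integral_const_mul, centered_quartic_integral hT]
    field_simp
    ring
  rw [hD v]
  simp only [projMax]
  simp only [hD]
  rw [h1, h2, h3]
  have m2 : Real.sqrt τ * Real.sqrt τ = τ := Real.mul_self_sqrt hT.le
  have m1 : Real.sqrt 2 * Real.sqrt 2 = (2 : ℝ) := Real.mul_self_sqrt (by norm_num)
  have hcoef : 1 / R * R' + (v - U) / Real.sqrt τ * (1 / R * (R * U' / Real.sqrt τ))
      + Real.sqrt 2 * ((v - U) ^ 2 / (2 * τ) - 1 / 2)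
          * (1 / R * (R * Real.sqrt 2 * T' / (2 * τ)))
      = R' / R + U' * (v - U) / τ + T' * ((v - U) ^ 2 / (2 * τ ^ 2) - 1 / (2 * τ)) := by
    set s : ℝ := Real.sqrt τ with hsdef
    set a : ℝ := Real.sqrt 2 with hadef
    have m2' : s * s = τ := m2
    have m1' : a * a = (2 : ℝ) := m1
    have hsne' : s ≠ 0 := hsτne
    have hane' : a ≠ 0 := hs2ne
    rw [← m2', ← m1']
    field_simp
  rw [hcoef]
end

section
/- Let ρ, u, T : ℝ → ℝ be differentiable at a point x with ρ(x) > 0 and T(x) > 0, and let M(x,v) = (ρ(x)/√(2πT(x))) exp(−(v−u(x))²/(2T(x))). Then the complementary projection of the Maxwellian transport term admits the closed form: for all v ∈ ℝ, v ∂ₓM(x,v) − Π_{M(x,·)}[v ∂ₓM(x,·)](v) = ((v−u(x))³/(2T(x)) − (3/2)(v−u(x))) · (T′(x)/T(x)) · M(x,v). -/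
open MeasureTheory Real

namespace CPMT

open Filter

variable {b : ℝ}

lemma igauss_pow (hb : 0 < b) (n : ℕ) :
    Integrable (fun x : ℝ => x ^ n * Real.exp (-b * x ^ 2)) := by
  have h : (-1 : ℝ) < (n : ℝ) := lt_of_lt_of_le neg_one_lt_zero (Nat.cast_nonneg n)
  simpa [Real.rpow_natCast] using integrable_rpow_mul_exp_neg_mul_sq hb h

lemma tendsto_top (hb : 0 < b) (n : ℕ) :
    Tendsto (fun x : ℝ => x ^ n * Real.exp (-b * x ^ 2)) atTop (nhds 0) := by
  have h := rpow_mul_exp_neg_mul_sq_isLittleO_exp_neg hb (n : ℝ)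
  simp_rw [Real.rpow_natCast] at h
  refine h.trans_tendsto ?_
  have : Tendsto (fun x : ℝ => -(1 / 2) * x) atTop atBot := by
    apply Tendsto.const_mul_atTop_of_neg (by norm_num : -(1/2 : ℝ) < 0) tendsto_id
  exact Real.tendsto_exp_atBot.comp this

lemma tendsto_bot (hb : 0 < b) (n : ℕ) :
    Tendsto (fun x : ℝ => x ^ n * Real.exp (-b * x ^ 2)) atBot (nhds 0) := by
  have h := (tendsto_top hb n).comp tendsto_neg_atBot_atTop
  have h2 := h.const_mul ((-1 : ℝ) ^ n)
  rw [mul_zero] at h2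
  convert h2 using 2 with x
  simp only [Function.comp]
  rw [neg_sq, ← mul_assoc, ← mul_pow]
  ring_nf

lemma gauss_rec (hb : 0 < b) (n : ℕ) :
    ∫ x : ℝ, x ^ (n + 2) * Real.exp (-b * x ^ 2)
      = ((n + 1 : ℝ) / (2 * b)) * ∫ x : ℝ, x ^ n * Real.exp (-b * x ^ 2) := by
  have hb' : b ≠ 0 := hb.ne'
  set f : ℝ → ℝ := fun x => -(1 / (2 * b)) * (x ^ (n + 1) * Real.exp (-b * x ^ 2)) with hf
  set f' : ℝ → ℝ := fun x =>
    x ^ (n + 2) * Real.exp (-b * x ^ 2)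
      - ((n + 1 : ℝ) / (2 * b)) * (x ^ n * Real.exp (-b * x ^ 2)) with hf'
  have hderiv : ∀ x, HasDerivAt f (f' x) x := by
    intro x
    have h1 : HasDerivAt (fun x : ℝ => x ^ (n + 1)) ((n + 1 : ℝ) * x ^ n) x := by
      simpa using hasDerivAt_pow (n + 1) x
    have h2 : HasDerivAt (fun x : ℝ => Real.exp (-b * x ^ 2))
        (Real.exp (-b * x ^ 2) * (-b * (2 * x))) x := by
      have := ((hasDerivAt_pow 2 x).const_mul (-b)).exp
      simpa using this
    have := (h1.mul h2).const_mul (-(1 / (2 * b)))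
    refine this.congr_deriv (Eq.symm ?_)
    simp only [hf']
    field_simp
    ring
  have hint : Integrable f' :=
    (igauss_pow hb (n + 2)).sub ((igauss_pow hb n).const_mul _)
  have hbot : Tendsto f atBot (nhds 0) := by
    have h := (tendsto_bot hb (n + 1)).const_mul (-(1 / (2 * b)))
    rw [mul_zero] at h; exact h
  have htop : Tendsto f atTop (nhds 0) := by
    have h := (tendsto_top hb (n + 1)).const_mul (-(1 / (2 * b)))
    rw [mul_zero] at h; exact h
  have h0 := integral_of_hasDerivAt_of_tendsto hderiv hint hbot htop
  rw [sub_zero] at h0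
  have := integral_sub (igauss_pow hb (n + 2)) ((igauss_pow hb n).const_mul ((n + 1 : ℝ) / (2 * b)))
  simp only [hf'] at h0
  rw [integral_const_mul] at this
  rw [this] at h0
  linarith [h0]

lemma gauss_odd (hb : 0 < b) (k : ℕ) :
    ∫ x : ℝ, x ^ (2 * k + 1) * Real.exp (-b * x ^ 2) = 0 := by
  have h := integral_neg_eq_self (fun x : ℝ => x ^ (2 * k + 1) * Real.exp (-b * x ^ 2)) volume
  have h2 : (∫ x : ℝ, (-x) ^ (2 * k + 1) * Real.exp (-b * (-x) ^ 2))
      = - ∫ x : ℝ, x ^ (2 * k + 1) * Real.exp (-b * x ^ 2) := by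
    rw [← integral_neg]
    congr 1 with x
    rw [neg_sq, Odd.neg_pow ⟨k, by ring⟩]
    ring
  rw [h2] at h
  linarith

lemma g0 (hb : 0 < b) : ∫ x : ℝ, Real.exp (-b * x ^ 2) = Real.sqrt (π / b) :=
  integral_gaussian b

lemma g2 (hb : 0 < b) :
    ∫ x : ℝ, x ^ 2 * Real.exp (-b * x ^ 2) = (1 / (2 * b)) * Real.sqrt (π / b) := by
  have h := gauss_rec hb 0
  simp only [pow_zero, one_mul] at h
  rw [show (2:ℕ) = 0+2 from rfl, h, g0 hb]; norm_num

lemma g4 (hb : 0 < b) :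
    ∫ x : ℝ, x ^ 4 * Real.exp (-b * x ^ 2) = (3 / (2 * b) ^ 2) * Real.sqrt (π / b) := by
  have := gauss_rec hb 2
  rw [g2 hb] at this
  rw [show (4 : ℕ) = 2 + 2 from rfl, this]
  field_simp
  ring

lemma g6 (hb : 0 < b) :
    ∫ x : ℝ, x ^ 6 * Real.exp (-b * x ^ 2) = (15 / (2 * b) ^ 3) * Real.sqrt (π / b) := by
  have := gauss_rec hb 4
  rw [g4 hb] at this
  rw [show (6 : ℕ) = 4 + 2 from rfl, this]
  field_simp
  ring

lemma g1 (hb : 0 < b) : ∫ x : ℝ, x * Real.exp (-b * x ^ 2) = 0 := by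
  simpa using gauss_odd hb 0

lemma g3 (hb : 0 < b) : ∫ x : ℝ, x ^ 3 * Real.exp (-b * x ^ 2) = 0 := by
  simpa using gauss_odd hb 1

lemma g5 (hb : 0 < b) : ∫ x : ℝ, x ^ 5 * Real.exp (-b * x ^ 2) = 0 := by
  simpa using gauss_odd hb 2

lemma integral_poly6 (hb : 0 < b) (c0 c1 c2 c3 c4 c5 c6 : ℝ) :
    ∫ y : ℝ, (c0 + c1 * y + c2 * y ^ 2 + c3 * y ^ 3 + c4 * y ^ 4 + c5 * y ^ 5 + c6 * y ^ 6)
        * Real.exp (-b * y ^ 2)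
    = (c0 + c2 * (1 / (2 * b)) + c4 * (3 / (2 * b) ^ 2) + c6 * (15 / (2 * b) ^ 3))
        * Real.sqrt (π / b) := by
  have i0 := (igauss_pow hb 0).const_mul c0
  have i1 := (igauss_pow hb 1).const_mul c1
  have i2 := (igauss_pow hb 2).const_mul c2
  have i3 := (igauss_pow hb 3).const_mul c3
  have i4 := (igauss_pow hb 4).const_mul c4
  have i5 := (igauss_pow hb 5).const_mul c5
  have i6 := (igauss_pow hb 6).const_mul c6
  have heq : (fun y : ℝ => (c0 + c1 * y + c2 * y ^ 2 + c3 * y ^ 3 + c4 * y ^ 4 + c5 * y ^ 5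
        + c6 * y ^ 6) * Real.exp (-b * y ^ 2))
      = fun y : ℝ => c0 * (y ^ 0 * Real.exp (-b * y ^ 2))
        + (c1 * (y ^ 1 * Real.exp (-b * y ^ 2))
        + (c2 * (y ^ 2 * Real.exp (-b * y ^ 2))
        + (c3 * (y ^ 3 * Real.exp (-b * y ^ 2))
        + (c4 * (y ^ 4 * Real.exp (-b * y ^ 2))
        + (c5 * (y ^ 5 * Real.exp (-b * y ^ 2))
        + c6 * (y ^ 6 * Real.exp (-b * y ^ 2))))))) := by
    funext y; ring
  have e1 := integral_add i0 (i1.add (i2.add (i3.add (i4.add (i5.add i6)))))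
  have e2 := integral_add i1 (i2.add (i3.add (i4.add (i5.add i6))))
  have e3 := integral_add i2 (i3.add (i4.add (i5.add i6)))
  have e4 := integral_add i3 (i4.add (i5.add i6))
  have e5 := integral_add i4 (i5.add i6)
  have e6 := integral_add i5 i6
  simp only [Pi.add_apply] at e1 e2 e3 e4 e5 e6
  rw [heq, e1, e2, e3, e4, e5, e6,
    integral_const_mul, integral_const_mul, integral_const_mul, integral_const_mul,
    integral_const_mul, integral_const_mul, integral_const_mul]
  simp only [pow_zero, one_mul, pow_one]
  rw [g0 hb, g1 hb, g2 hb, g3 hb, g4 hb, g5 hb, g6 hb]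
  ring

lemma maxwellian_hasDerivAt (ρ u T : ℝ → ℝ) (x : ℝ)
    (hρd : DifferentiableAt ℝ ρ x) (hud : DifferentiableAt ℝ u x)
    (hTd : DifferentiableAt ℝ T x) (hρ : 0 < ρ x) (hT : 0 < T x) (v : ℝ) :
    HasDerivAt (fun s : ℝ => maxwellian (ρ s) (u s) (T s) v)
      ((deriv ρ x / ρ x - deriv T x / (2 * T x)
        + deriv u x * (v - u x) / T x
        + deriv T x * (v - u x) ^ 2 / (2 * (T x) ^ 2))
        * maxwellian (ρ x) (u x) (T x) v) x := by
  have hπ : (0 : ℝ) < 2 * π * T x := by positivity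
  have hsA : (0 : ℝ) < Real.sqrt (2 * π * T x) := Real.sqrt_pos.mpr hπ
  have h1 : HasDerivAt (fun s => 2 * π * T s) (2 * π * deriv T x) x := by
    simpa using (hTd.hasDerivAt.const_mul (2 * π))
  have h2 := h1.sqrt hπ.ne'
  have h3 := (hρd.hasDerivAt).div h2 hsA.ne'
  have hu : HasDerivAt (fun s => v - u s) (-deriv u x) x := by
    exact hud.hasDerivAt.const_sub v
  have h4num : HasDerivAt (fun s => -(v - u s) ^ 2)
      (-(2 * (v - u x) ^ 1 * (-deriv u x))) x := (hu.pow 2).neg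
  have h4den : HasDerivAt (fun s => 2 * T s) (2 * deriv T x) x := by
    simpa using hTd.hasDerivAt.const_mul (2 : ℝ)
  have hTne : 2 * T x ≠ 0 := by positivity
  have h4 := h4num.div h4den hTne
  have h5 := h4.exp
  have htot := h3.mul h5
  refine htot.congr_deriv (Eq.symm ?_)
  simp only [Pi.div_apply]
  unfold maxwellian
  set sA := Real.sqrt (2 * π * T x) with hsAdef
  have hA : sA ^ 2 = 2 * π * T x := Real.sq_sqrt hπ.le
  have hsA0 : sA ≠ 0 := hsA.ne'
  have hT0 : T x ≠ 0 := hT.ne'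
  have hA3 : sA ^ 3 = 2 * π * T x * sA := by rw [pow_succ, hA]
  have hA4 : sA ^ 4 = (2 * π * T x) ^ 2 := by
    rw [show (4 : ℕ) = 2 * 2 from rfl, pow_mul, hA]
  have hA5 : sA ^ 5 = (2 * π * T x) ^ 2 * sA := by rw [pow_succ, hA4]
  have hA6 : sA ^ 6 = (2 * π * T x) ^ 3 := by
    rw [show (6 : ℕ) = 2 * 3 from rfl, pow_mul, hA]
  rw [hA]
  field_simp
  ring_nf
  simp only [hA6, hA5, hA4, hA3, hA]
  ring

end CPMT

set_option maxHeartbeats 2000000 in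
theorem complementary_projection_of_maxwellian_transport
    (ρ u T : ℝ → ℝ) (x : ℝ)
    (hρd : DifferentiableAt ℝ ρ x) (hud : DifferentiableAt ℝ u x)
    (hTd : DifferentiableAt ℝ T x)
    (hρ : 0 < ρ x) (hT : 0 < T x) :
    ∀ v : ℝ,
      v * deriv (fun s : ℝ => maxwellian (ρ s) (u s) (T s) v) x
        - projMax (ρ x) (u x) (T x)
            (fun w : ℝ => w * deriv (fun s : ℝ => maxwellian (ρ s) (u s) (T s) w) x) v
      = ((v - u x) ^ 3 / (2 * T x) - (3 / 2) * (v - u x)) * (deriv T x / T x)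
          * maxwellian (ρ x) (u x) (T x) v := by

  intro v
  have hT0 : T x ≠ 0 := ne_of_gt hT
  have hρ0 : ρ x ≠ 0 := ne_of_gt hρ
  have hβ : (0:ℝ) < 1 / (2 * T x) := by positivity
  have hD : ∀ w : ℝ, deriv (fun s : ℝ => maxwellian (ρ s) (u s) (T s) w) x
      = ((deriv ρ x / ρ x - deriv T x / (2 * T x)) + (deriv u x / T x) * (w - u x) + (deriv T x / (2 * (T x) ^ 2)) * (w - u x) ^ 2) * maxwellian (ρ x) (u x) (T x) w := by
    intro w
    rw [(CPMT.maxwellian_hasDerivAt ρ u T x hρd hud hTd hρ hT w).deriv]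
    ring
  have hM : ∀ w : ℝ, maxwellian (ρ x) (u x) (T x) w
      = (ρ x / Real.sqrt (2 * Real.pi * T x)) * Real.exp (-(1 / (2 * T x)) * (w - u x) ^ 2) := by
    intro w
    simp only [maxwellian]
    congr 1
    field_simp
  have hb1 : 1 / (2 * (1 / (2 * T x))) = T x := by field_simp
  have hb2 : 3 / (2 * (1 / (2 * T x))) ^ 2 = 3 * (T x) ^ 2 := by field_simp
  have hb3 : 15 / (2 * (1 / (2 * T x))) ^ 3 = 15 * (T x) ^ 3 := by field_simp
  have hCR : (ρ x / Real.sqrt (2 * Real.pi * T x)) * Real.sqrt (Real.pi / (1 / (2 * T x))) = ρ x := by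
    rw [show Real.pi / (1 / (2 * T x)) = 2 * Real.pi * T x by field_simp]
    exact div_mul_cancel₀ _ (by positivity)
  have hf1 : (fun w : ℝ => w * deriv (fun s : ℝ => maxwellian (ρ s) (u s) (T s) w) x)
      = fun w : ℝ => (fun y : ℝ => ((u x * (deriv ρ x / ρ x - deriv T x / (2 * T x)) * (ρ x / Real.sqrt (2 * Real.pi * T x))) + (((deriv ρ x / ρ x - deriv T x / (2 * T x)) + u x * (deriv u x / T x)) * (ρ x / Real.sqrt (2 * Real.pi * T x))) * y + (((deriv u x / T x) + u x * (deriv T x / (2 * (T x) ^ 2))) * (ρ x / Real.sqrt (2 * Real.pi * T x))) * y ^ 2 + ((deriv T x / (2 * (T x) ^ 2)) * (ρ x / Real.sqrt (2 * Real.pi * T x))) * y ^ 3 + (0) * y ^ 4 + (0) * y ^ 5 + (0) * y ^ 6) * Real.exp (-(1 / (2 * T x)) * y ^ 2)) (w - u x) := by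
    funext w
    simp only
    rw [hD w, hM w]
    ring
  have e1 : (∫ w : ℝ, w * deriv (fun s : ℝ => maxwellian (ρ s) (u s) (T s) w) x)
      = (u x * (deriv ρ x / ρ x - deriv T x / (2 * T x)) + ((deriv u x / T x) + u x * (deriv T x / (2 * (T x) ^ 2))) * T x) * ((ρ x / Real.sqrt (2 * Real.pi * T x)) * Real.sqrt (Real.pi / (1 / (2 * T x)))) := by
    rw [hf1, integral_sub_right_eq_self (fun y : ℝ => ((u x * (deriv ρ x / ρ x - deriv T x / (2 * T x)) * (ρ x / Real.sqrt (2 * Real.pi * T x))) + (((deriv ρ x / ρ x - deriv T x / (2 * T x)) + u x * (deriv u x / T x)) * (ρ x / Real.sqrt (2 * Real.pi * T x))) * y + (((deriv u x / T x) + u x * (deriv T x / (2 * (T x) ^ 2))) * (ρ x / Real.sqrt (2 * Real.pi * T x))) * y ^ 2 + ((deriv T x / (2 * (T x) ^ 2)) * (ρ x / Real.sqrt (2 * Real.pi * T x))) * y ^ 3 + (0) * y ^ 4 + (0) * y ^ 5 + (0) * y ^ 6) * Real.exp (-(1 / (2 * T x)) * y ^ 2)) (u x), CPMT.integral_poly6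 hβ, hb1, hb2, hb3]
    ring
  have hf2 : (fun w : ℝ => (w - u x) / Real.sqrt (T x) * (w * deriv (fun s : ℝ => maxwellian (ρ s) (u s) (T s) w) x))
      = fun w : ℝ => (fun y : ℝ => ((0) + ((u x * (deriv ρ x / ρ x - deriv T x / (2 * T x)) * (ρ x / Real.sqrt (2 * Real.pi * T x))) / Real.sqrt (T x)) * y + ((((deriv ρ x / ρ x - deriv T x / (2 * T x)) + u x * (deriv u x / T x)) * (ρ x / Real.sqrt (2 * Real.pi * T x))) / Real.sqrt (T x)) * y ^ 2 + ((((deriv u x / T x) + u x * (deriv T x / (2 * (T x) ^ 2))) * (ρ x / Real.sqrt (2 * Real.pi * T x))) / Real.sqrt (T x)) * y ^ 3 + (((deriv T x / (2 * (T x) ^ 2)) * (ρ x / Real.sqrt (2 * Real.pi * T x))) / Real.sqrt (T x)) * y ^ 4 + (0) * y ^ 5 + (0) * y ^ 6) * Real.exp (-(1 / (2 * T x)) * y ^ 2)) (w - u x) := by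
    funext w
    simp only
    rw [hD w, hM w]
    ring
  have e2 : (∫ w : ℝ, (w - u x) / Real.sqrt (T x) * (w * deriv (fun s : ℝ => maxwellian (ρ s) (u s) (T s) w) x))
      = (((deriv ρ x / ρ x - deriv T x / (2 * T x)) + u x * (deriv u x / T x)) * T x + 3 * (deriv T x / (2 * (T x) ^ 2)) * (T x) ^ 2) / Real.sqrt (T x) * ((ρ x / Real.sqrt (2 * Real.pi * T x)) * Real.sqrt (Real.pi / (1 / (2 * T x)))) := by
    rw [hf2, integral_sub_right_eq_self (fun y : ℝ => ((0) + ((u x * (deriv ρ x / ρ x - deriv T x / (2 * T x)) * (ρ x / Real.sqrt (2 * Real.pi * T x))) / Real.sqrt (T x)) * y + ((((deriv ρ x / ρ x - deriv T x / (2 * T x)) + u x * (deriv u x / T x)) * (ρ x / Real.sqrt (2 * Real.pi * T x))) / Real.sqrt (T x)) * y ^ 2 + ((((deriv u x / T x) + u x * (deriv T x / (2 * (T x) ^ 2))) * (ρ x / Real.sqrt (2 * Real.pi * T x))) / Real.sqrt (T x)) * y ^ 3 + (((deriv T x / (2 * (T x) ^ 2)) * (ρ x / Real.sqrt (2 * Real.pi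 * T x))) / Real.sqrt (T x)) * y ^ 4 + (0) * y ^ 5 + (0) * y ^ 6) * Real.exp (-(1 / (2 * T x)) * y ^ 2)) (u x), CPMT.integral_poly6 hβ, hb1, hb2, hb3]
    ring
  have hf3 : (fun w : ℝ => Real.sqrt 2 * ((w - u x) ^ 2 / (2 * T x) - 1 / 2) * (w * deriv (fun s : ℝ => maxwellian (ρ s) (u s) (T s) w) x))
      = fun w : ℝ => (fun y : ℝ => ((-(Real.sqrt 2 / 2) * (u x * (deriv ρ x / ρ x - deriv T x / (2 * T x)) * (ρ x / Real.sqrt (2 * Real.pi * T x)))) + (-(Real.sqrt 2 / 2) * (((deriv ρ x / ρ x - deriv T x / (2 * T x)) + u x * (deriv u x / T x)) * (ρ x / Real.sqrt (2 * Real.pi * T x)))) * y + (Real.sqrt 2 / (2 * T x) * (u x * (deriv ρ x / ρ x - deriv T x / (2 * T x)) * (ρ x / Real.sqrt (2 * Real.pi * T x))) - Real.sqrt 2 / 2 * (((deriv u x / T x) + u x * (deriv T x / (2 * (T x) ^ 2))) * (ρ x / Real.sqrt (2 * Real.pi * T x)))) * y ^ 2 + (Real.sqrt 2 / (2 * T x)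 * (((deriv ρ x / ρ x - deriv T x / (2 * T x)) + u x * (deriv u x / T x)) * (ρ x / Real.sqrt (2 * Real.pi * T x))) - Real.sqrt 2 / 2 * ((deriv T x / (2 * (T x) ^ 2)) * (ρ x / Real.sqrt (2 * Real.pi * T x)))) * y ^ 3 + (Real.sqrt 2 / (2 * T x) * (((deriv u x / T x) + u x * (deriv T x / (2 * (T x) ^ 2))) * (ρ x / Real.sqrt (2 * Real.pi * T x)))) * y ^ 4 + (Real.sqrt 2 / (2 * T x) * ((deriv T x / (2 * (T x) ^ 2)) * (ρ x / Real.sqrt (2 * Real.pi * T x)))) * y ^ 5 + (0) * y ^ 6) * Real.exp (-(1 / (2 * T x)) * y ^ 2)) (w - u x) := by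
    funext w
    simp only
    rw [hD w, hM w]
    ring
  have e3 : (∫ w : ℝ, Real.sqrt 2 * ((w - u x) ^ 2 / (2 * T x) - 1 / 2) * (w * deriv (fun s : ℝ => maxwellian (ρ s) (u s) (T s) w) x))
      = (-(Real.sqrt 2 / 2) * (u x * (deriv ρ x / ρ x - deriv T x / (2 * T x))) + (Real.sqrt 2 / (2 * T x) * (u x * (deriv ρ x / ρ x - deriv T x / (2 * T x))) - Real.sqrt 2 / 2 * (((deriv u x / T x) + u x * (deriv T x / (2 * (T x) ^ 2))))) * T x + Real.sqrt 2 / (2 * T x) * (((deriv u x / T x) + u x * (deriv T x / (2 * (T x) ^ 2)))) * (3 * (T x) ^ 2)) * ((ρ x / Real.sqrt (2 * Real.pi * T x)) * Real.sqrt (Real.pi / (1 / (2 * T x)))) := by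
    rw [hf3, integral_sub_right_eq_self (fun y : ℝ => ((-(Real.sqrt 2 / 2) * (u x * (deriv ρ x / ρ x - deriv T x / (2 * T x)) * (ρ x / Real.sqrt (2 * Real.pi * T x)))) + (-(Real.sqrt 2 / 2) * (((deriv ρ x / ρ x - deriv T x / (2 * T x)) + u x * (deriv u x / T x)) * (ρ x / Real.sqrt (2 * Real.pi * T x)))) * y + (Real.sqrt 2 / (2 * T x) * (u x * (deriv ρ x / ρ x - deriv T x / (2 * T x)) * (ρ x / Real.sqrt (2 * Real.pi * T x))) - Real.sqrt 2 / 2 * (((deriv u x / T x) + u x * (deriv T x / (2 * (T x) ^ 2))) * (ρ x / Real.sqrt (2 * Real.pi * T x)))) * y ^ 2 + (Real.sqrt 2 / (2 * T x) * (((deriv ρ x / ρ x - deriv T x / (2 * T x)) + u x * (deriv u x / T x)) * (ρ x / Real.sqrt (2 * Real.pi * T x))) - Real.sqrt 2 / 2 * ((deriv T x / (2 * (T x) ^ 2)) * (ρ x / Real.sqrt (2 * Real.pi * T x)))) * y ^ 3 + (Real.sqrt 2 / (2 * T x) * (((deriv u x / T x) + u x * (deriv T x / (2 * (T x) ^ 2)))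 * (ρ x / Real.sqrt (2 * Real.pi * T x)))) * y ^ 4 + (Real.sqrt 2 / (2 * T x) * ((deriv T x / (2 * (T x) ^ 2)) * (ρ x / Real.sqrt (2 * Real.pi * T x)))) * y ^ 5 + (0) * y ^ 6) * Real.exp (-(1 / (2 * T x)) * y ^ 2)) (u x), CPMT.integral_poly6 hβ, hb1, hb2, hb3]
    ring
  simp only [projMax]
  rw [e1, e2, e3, hCR, hD v]
  set Mv := maxwellian (ρ x) (u x) (T x) v with hMv
  set s2 := Real.sqrt 2 with hs2def
  set sS := Real.sqrt (T x) with hsSdef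
  have hs2 : s2 ^ 2 = 2 := Real.sq_sqrt (by norm_num)
  have hsS : sS ^ 2 = T x := Real.sq_sqrt hT.le
  have hs20 : s2 ≠ 0 := by
    rw [hs2def]; exact Real.sqrt_ne_zero'.mpr (by norm_num)
  have hsS0 : sS ≠ 0 := by
    rw [hsSdef]; exact Real.sqrt_ne_zero'.mpr hT
  have hs23 : s2 ^ 3 = 2 * s2 := by rw [pow_succ, hs2]
  have hs24 : s2 ^ 4 = 4 := by rw [show (4:ℕ) = 2*2 from rfl, pow_mul, hs2]; norm_num
  have hsS3 : sS ^ 3 = T x * sS := by rw [pow_succ, hsS]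
  have hsS4 : sS ^ 4 = (T x) ^ 2 := by rw [show (4:ℕ) = 2*2 from rfl, pow_mul, hsS]
  field_simp
  ring_nf
  simp only [hs24, hs23, hs2, hsS4, hsS3, hsS]
  ring
end

section
/- Let c > 0, ε > 0, and for Δt > 0 define the TR-BDF2 weight W(Δt) = (48ε² − 10cεΔt)/(48ε² + 14cεΔt + (cΔt)²). Then: (a) −1 < W(Δt) < 1 for every Δt > 0 (stability); (b) W(Δt) → 0 as Δt → ∞ (L-stability); and (c) for any W ∈ ℝ, the pressure-tensor update (P₁₁′, P₁₂′, P₂₂′) = ((1/2)((1+W)P₁₁ + (1−W)P₂₂), W·P₁₂, (1/2)((1−W)P₁₁ + (1+W)P₂₂)) conserves the trace: P₁₁′ + P₂₂′ = P₁₁ + P₂₂. -/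
open Filter

/-- The TR-BDF2 weight for the ES-BGK pressure-tensor relaxation step. -/
noncomputable def trbdf2W (c ε Δt : ℝ) : ℝ :=
  (48 * ε ^ 2 - 10 * c * ε * Δt) /
    (48 * ε ^ 2 + 14 * c * ε * Δt + (c * Δt) ^ 2)

theorem trbdf2_stability (c ε : ℝ) (hc : 0 < c) (hε : 0 < ε) :
    -- (a) stability
    (∀ Δt : ℝ, 0 < Δt → -1 < trbdf2W c ε Δt ∧ trbdf2W c ε Δt < 1) ∧
    -- (b) L-stability
    Tendsto (fun Δt : ℝ => trbdf2W c ε Δt) atTop (nhds 0) ∧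
    -- (c) trace conservation of the pressure-tensor update
    (∀ W P₁₁ P₁₂ P₂₂ : ℝ,
      (1 / 2) * ((1 + W) * P₁₁ + (1 - W) * P₂₂)
        + (1 / 2) * ((1 - W) * P₁₁ + (1 + W) * P₂₂) = P₁₁ + P₂₂) := by
  refine ⟨?_, ?_, ?_⟩
  · intro Δt hΔt
    have hden : 0 < 48 * ε ^ 2 + 14 * c * ε * Δt + (c * Δt) ^ 2 := by positivity
    constructor
    · rw [trbdf2W, neg_lt, ← neg_div, div_lt_one hden]
      nlinarith [mul_pos (mul_pos hc hε) hΔt]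
    · rw [trbdf2W, div_lt_one hden]
      nlinarith [mul_pos (mul_pos hc hε) hΔt, sq_nonneg (c * Δt)]
  · have h1 : Tendsto (fun Δt : ℝ => (48 * ε ^ 2 / Δt ^ 2 - 10 * c * ε / Δt) /
        (48 * ε ^ 2 / Δt ^ 2 + 14 * c * ε / Δt + c ^ 2)) atTop (nhds 0) := by
      have hnum : Tendsto (fun Δt : ℝ => 48 * ε ^ 2 / Δt ^ 2 - 10 * c * ε / Δt)
          atTop (nhds 0) := by
        have := (tendsto_const_nhds (x := (48 : ℝ) * ε ^ 2)).div_atTop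
          (tendsto_pow_atTop (n := 2) two_ne_zero |>.comp tendsto_id)
        have h2 := (tendsto_const_nhds (x := (10 : ℝ) * c * ε)).div_atTop tendsto_id
        simpa using this.sub h2
      have hden : Tendsto (fun Δt : ℝ => 48 * ε ^ 2 / Δt ^ 2 + 14 * c * ε / Δt + c ^ 2)
          atTop (nhds (0 + 0 + c ^ 2)) := by
        have := (tendsto_const_nhds (x := (48 : ℝ) * ε ^ 2)).div_atTop
          (tendsto_pow_atTop (n := 2) two_ne_zero |>.comp tendsto_id)
        have h2 := (tendsto_const_nhds (x := (14 : ℝ) * c * ε)).div_atTop tendsto_id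
        exact (this.add h2).add tendsto_const_nhds
      have := hnum.div hden (by positivity)
      rw [show (0:ℝ) / (0 + 0 + c ^ 2) = 0 by simp] at this
      exact this
    refine h1.congr' ?_
    filter_upwards [eventually_gt_atTop (0 : ℝ)] with Δt hΔt
    have h2 : Δt ^ 2 ≠ 0 := by positivity
    have h0 : Δt ≠ 0 := ne_of_gt hΔt
    rw [trbdf2W]
    field_simp
  · intro W P₁₁ P₁₂ P₂₂; ring
end
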